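/- (Proposition 1, identification under ordered consideration) Let D ≥ 2 and suppose for i = 1, 2: μᵢ is a probability measure on ℝ and Qᵢ : Finset (Fin D) → ℝ is nonnegative with Σ_K Qᵢ K = 1, satisfying Qᵢ K = 0 for every K containing alternative 0 but not alternative 1, and Σ_{K ∋ 0} Qᵢ K > 0. Suppose U : X → ℝ → Fin D → ℝ, with ν ↦ U x ν j measurable for each x and j, satisfies: (b) there is c : X → ℝ such that for every x ∈ X and ν ∈ ℝ, U x ν 0 > U x ν 1 if and only if ν < c x; (c) for every x ∈ X and ν, if U x ν 0 > U x ν 1 then U x ν 0 > U x ν j for every alternative j ∉ {0, 1}; and (d) there are ν^l < ν^u with [ν^l, ν^u] ⊆ c '' X. If the induced choice probabilities of alternative 0 coincide, P₁(x) = P₂(x) for all x ∈ X, then for every ν ∈ [ν^l, ν^u], (μ₁((−∞, ν)) − μ₁((−∞, ν^l))) · (μ₂((−∞, ν^u)) − μ₂((−∞, ν^l))) = (μ₂((−∞, ν)) − μ₂((−∞, ν^l))) · (μ₁((−∞, ν^u)) − μ₁((−∞, ν^l))); that is, the conditional preference distributions on [ν^l, ν^u] coincide. -/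
import Mathlib


open MeasureTheory

/-- Proposition 1 (identification under ordered consideration): with `D + 2 ≥ 2`
alternatives, alternative `0` considered with positive probability and only together
with alternative `1`, a cutoff `c` between alternatives `0` and `1` covering
`[ν^l, ν^u]`, and alternative `0` preferred to everything else whenever it beats
alternative `1`, equality of the induced choice probabilities of alternative `0`
implies that the preference distributions conditional on `[ν^l, ν^u]` coincide. -/
theorem identification_ordered_consideration (D : ℕ) (X : Type*)
    (U : X → ℝ → Fin (D + 2) → ℝ)
    (hUmeas : ∀ (x : X) (j : Fin (D + 2)), Measurable fun ν => U x ν j)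
    (μ₁ μ₂ : Measure ℝ) [IsProbabilityMeasure μ₁] [IsProbabilityMeasure μ₂]
    (Q₁ Q₂ : Finset (Fin (D + 2)) → ℝ)
    (hQ₁pos : ∀ K, 0 ≤ Q₁ K) (hQ₂pos : ∀ K, 0 ≤ Q₂ K)
    (hQ₁sum : ∑ K : Finset (Fin (D + 2)), Q₁ K = 1)
    (hQ₂sum : ∑ K : Finset (Fin (D + 2)), Q₂ K = 1)
    (hQ₁ord : ∀ K : Finset (Fin (D + 2)), 0 ∈ K → 1 ∉ K → Q₁ K = 0)
    (hQ₂ord : ∀ K : Finset (Fin (D + 2)), 0 ∈ K → 1 ∉ K → Q₂ K = 0)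
    (hQ₁cons : 0 < ∑ K ∈ Finset.univ.filter (fun K : Finset (Fin (D + 2)) => 0 ∈ K), Q₁ K)
    (hQ₂cons : 0 < ∑ K ∈ Finset.univ.filter (fun K : Finset (Fin (D + 2)) => 0 ∈ K), Q₂ K)
    (c : X → ℝ)
    (hcut : ∀ (x : X) (ν : ℝ), U x ν 0 > U x ν 1 ↔ ν < c x)
    (hord : ∀ (x : X) (ν : ℝ), U x ν 0 > U x ν 1 →
      ∀ j : Fin (D + 2), j ≠ 0 → j ≠ 1 → U x ν 0 > U x ν j)
    (νl νu : ℝ) (hν : νl < νu) (hcov : Set.Icc νl νu ⊆ Set.range c)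
    (hobs : ∀ x : X,
      ∑ K ∈ Finset.univ.filter (fun K : Finset (Fin (D + 2)) => 0 ∈ K),
        Q₁ K * (μ₁ {ν | ∀ k ∈ K, k ≠ 0 → U x ν 0 > U x ν k}).toReal =
      ∑ K ∈ Finset.univ.filter (fun K : Finset (Fin (D + 2)) => 0 ∈ K),
        Q₂ K * (μ₂ {ν | ∀ k ∈ K, k ≠ 0 → U x ν 0 > U x ν k}).toReal) :
    ∀ ν : ℝ, νl ≤ ν → ν ≤ νu →
      ((μ₁ (Set.Iio ν)).toReal - (μ₁ (Set.Iio νl)).toReal) *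
          ((μ₂ (Set.Iio νu)).toReal - (μ₂ (Set.Iio νl)).toReal) =
        ((μ₂ (Set.Iio ν)).toReal - (μ₂ (Set.Iio νl)).toReal) *
          ((μ₁ (Set.Iio νu)).toReal - (μ₁ (Set.Iio νl)).toReal) := by
  have h10 : (1 : Fin (D + 2)) ≠ 0 := by
    intro h
    simpa using congrArg Fin.val h
  -- the event simplifies to a cutoff event
  have hset : ∀ (x : X) (K : Finset (Fin (D + 2))), 0 ∈ K → 1 ∈ K →
      {ν : ℝ | ∀ k ∈ K, k ≠ 0 → U x ν 0 > U x ν k} = Set.Iio (c x) := by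
    intro x K h0 h1
    ext ν
    simp only [Set.mem_setOf_eq, Set.mem_Iio]
    constructor
    · intro h
      exact (hcut x ν).mp (h 1 h1 h10)
    · intro h k hk hk0
      have hU : U x ν 0 > U x ν 1 := (hcut x ν).mpr h
      by_cases hk1 : k = 1
      · subst hk1; exact hU
      · exact hord x ν hU k hk0 hk1
  -- choice probabilities factor
  have hfac : ∀ (x : X) (μ : Measure ℝ) (Q : Finset (Fin (D + 2)) → ℝ),
      (∀ K : Finset (Fin (D + 2)), 0 ∈ K → 1 ∉ K → Q K = 0) →
      ∑ K ∈ Finset.univ.filter (fun K : Finset (Fin (D + 2)) => 0 ∈ K),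
        Q K * (μ {ν | ∀ k ∈ K, k ≠ 0 → U x ν 0 > U x ν k}).toReal =
      (∑ K ∈ Finset.univ.filter (fun K : Finset (Fin (D + 2)) => 0 ∈ K), Q K) *
        (μ (Set.Iio (c x))).toReal := by
    intro x μ Q hQord
    rw [Finset.sum_mul]
    refine Finset.sum_congr rfl ?_
    intro K hK
    have h0 : 0 ∈ K := (Finset.mem_filter.mp hK).2
    by_cases h1 : 1 ∈ K
    · rw [hset x K h0 h1]
    · rw [hQord K h0 h1]; ring
  set q₁ := ∑ K ∈ Finset.univ.filter (fun K : Finset (Fin (D + 2)) => 0 ∈ K), Q₁ K with hq₁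
  set q₂ := ∑ K ∈ Finset.univ.filter (fun K : Finset (Fin (D + 2)) => 0 ∈ K), Q₂ K with hq₂
  have key : ∀ t ∈ Set.Icc νl νu,
      q₁ * (μ₁ (Set.Iio t)).toReal = q₂ * (μ₂ (Set.Iio t)).toReal := by
    intro t ht
    obtain ⟨x, hx⟩ := hcov ht
    have h := hobs x
    rw [hfac x μ₁ Q₁ hQ₁ord, hfac x μ₂ Q₂ hQ₂ord, hx] at h
    exact h
  intro ν hl hu
  have e1 := key ν ⟨hl, hu⟩
  have e2 := key νl ⟨le_refl _, hν.le⟩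
  have e3 := key νu ⟨hν.le, le_refl _⟩
  have hq1 : q₁ ≠ 0 := ne_of_gt hQ₁cons
  have hq2 : q₂ ≠ 0 := ne_of_gt hQ₂cons
  have h2 : ∀ t ∈ Set.Icc νl νu,
      (μ₂ (Set.Iio t)).toReal = q₁ / q₂ * (μ₁ (Set.Iio t)).toReal := by
    intro t ht
    have := key t ht
    field_simp
    linarith [this]
  rw [h2 ν ⟨hl, hu⟩, h2 νl ⟨le_refl _, hν.le⟩, h2 νu ⟨hν.le, le_refl _⟩]
  ring
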